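/- arXiv:2108.01179 — 6 statements merged into one kernel-verified Lean document; each statement's English description precedes it below -/
import Mathlib

section
/- Let X ⊆ ℂⁿ be a closed subset, let x₀ ∈ X, and let π : ℂⁿ → ℂˡ be a surjective ℂ-linear map (the affine-chart form of a linear projection of projective space whose center lies in the hyperplane at infinity). Let Σ₀ denote the closure, in the unit sphere of ℂⁿ, of the set of secant directions {(x − x₀)/‖x − x₀‖ : x ∈ X, x ≠ x₀}. Then the following are equivalent: (i) there exists c > 0 such that c·‖x − x₀‖ ≤ ‖π(x) − π(x₀)‖ for all x ∈ X (equivalently, π restricted to X satisfies the two-sided semi-bi-Lipschitz estimate at x₀, the upper bound ‖π(x) − π(x₀)‖ ≤ ‖π‖·‖x − x₀‖ being automatic); (ii) Σ₀ ∩ ker π = ∅. -/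
/-- For a closed `X ⊆ ℂⁿ`, `x₀ ∈ X`, and a surjective `ℂ`-linear projection
`π : ℂⁿ → ℂˡ`, the restriction `π|_X` is semi-bi-Lipschitz at `x₀` (i.e. admits a lower bound
`c·‖x - x₀‖ ≤ ‖π x - π x₀‖` on `X`, the upper bound being automatic) if and only if the closure
`Σ₀` of the set of secant directions of `X` through `x₀` is disjoint from `ker π`. -/
theorem stmt_1 (n l : ℕ) (X : Set (EuclideanSpace ℂ (Fin n))) (hXcl : IsClosed X)
    (x₀ : EuclideanSpace ℂ (Fin n)) (hx₀ : x₀ ∈ X)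
    (π : EuclideanSpace ℂ (Fin n) →L[ℂ] EuclideanSpace ℂ (Fin l))
    (hsurj : Function.Surjective π) :
    (∃ c : ℝ, 0 < c ∧ ∀ x ∈ X, c * ‖x - x₀‖ ≤ ‖π x - π x₀‖) ↔
      closure {v : EuclideanSpace ℂ (Fin n) |
          ∃ x ∈ X, x ≠ x₀ ∧ v = ‖x - x₀‖⁻¹ • (x - x₀)} ∩
        {v : EuclideanSpace ℂ (Fin n) | π v = 0} = ∅ := by
  set S : Set (EuclideanSpace ℂ (Fin n)) :=
    {v | ∃ x ∈ X, x ≠ x₀ ∧ v = ‖x - x₀‖⁻¹ • (x - x₀)} with hS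
  have keynorm : ∀ x : EuclideanSpace ℂ (Fin n), x ≠ x₀ →
      ‖π (‖x - x₀‖⁻¹ • (x - x₀))‖ = ‖x - x₀‖⁻¹ * ‖π x - π x₀‖ := by
    intro x hx
    have hnn : (0:ℝ) ≤ ‖x - x₀‖⁻¹ := inv_nonneg.2 (norm_nonneg _)
    rw [π.map_smul_of_tower, norm_smul, Real.norm_of_nonneg hnn, map_sub]
  constructor
  · rintro ⟨c, hc, h⟩
    ext v
    simp only [Set.mem_inter_iff, Set.mem_setOf_eq, Set.mem_empty_iff_false, iff_false, not_and]
    intro hv hker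
    have hsub : closure S ⊆ {v | c ≤ ‖π v‖} := by
      apply closure_minimal
      · rintro v ⟨x, hx, hne, rfl⟩
        have hpos : (0:ℝ) < ‖x - x₀‖ := by
          rwa [norm_pos_iff, sub_ne_zero]
        have h1 := h x hx
        have h2 : c ≤ ‖x - x₀‖⁻¹ * ‖π x - π x₀‖ := by
          rw [le_inv_mul_iff₀ hpos, mul_comm]; exact h1
        rw [Set.mem_setOf_eq, keynorm x hne]; exact h2
      · exact isClosed_le continuous_const (continuous_norm.comp (π.continuous.comp continuous_id))
    have := hsub hv
    rw [Set.mem_setOf_eq, hker, norm_zero] at this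
    exact absurd (lt_of_lt_of_le hc this) (lt_irrefl 0)
  · intro hdis
    by_cases hSne : (closure S).Nonempty
    · have hbdd : Bornology.IsBounded S := by
        apply Metric.isBounded_iff.2 ⟨2, ?_⟩
        rintro v ⟨x, hx, hne, rfl⟩ w ⟨y, hy, hne', rfl⟩
        have hx0 : ‖x - x₀‖ ≠ 0 := fun h => hne (sub_eq_zero.1 (norm_eq_zero.1 h))
        have hy0 : ‖y - x₀‖ ≠ 0 := fun h => hne' (sub_eq_zero.1 (norm_eq_zero.1 h))
        have h1 : ‖(‖x - x₀‖⁻¹ • (x - x₀) : EuclideanSpace ℂ (Fin n))‖ = 1 := by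
          rw [norm_smul, Real.norm_of_nonneg (inv_nonneg.2 (norm_nonneg _)),
            inv_mul_cancel₀ hx0]
        have h2 : ‖(‖y - x₀‖⁻¹ • (y - x₀) : EuclideanSpace ℂ (Fin n))‖ = 1 := by
          rw [norm_smul, Real.norm_of_nonneg (inv_nonneg.2 (norm_nonneg _)),
            inv_mul_cancel₀ hy0]
        calc dist (‖x - x₀‖⁻¹ • (x - x₀)) (‖y - x₀‖⁻¹ • (y - x₀))
            ≤ ‖(‖x - x₀‖⁻¹ • (x - x₀) : EuclideanSpace ℂ (Fin n))‖ +
              ‖(‖y - x₀‖⁻¹ • (y - x₀) : EuclideanSpace ℂ (Fin n))‖ := dist_le_norm_add_norm _ _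
          _ = 2 := by rw [h1, h2]; norm_num
      have hK : IsCompact (closure S) := Metric.isCompact_of_isClosed_isBounded isClosed_closure hbdd.closure
      obtain ⟨v₀, hv₀, hmin⟩ := hK.exists_isMinOn hSne
        (continuous_norm.comp π.continuous).continuousOn
      have hcpos : 0 < ‖π v₀‖ := by
        rcases eq_or_lt_of_le (norm_nonneg (π v₀)) with h0 | h0
        · exfalso
          have : v₀ ∈ closure S ∩ {v | π v = 0} :=
            ⟨hv₀, by simpa [Set.mem_setOf_eq] using (norm_eq_zero.1 h0.symm)⟩
          rw [hdis] at this; exact this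
        · exact h0
      refine ⟨‖π v₀‖, hcpos, fun x hx => ?_⟩
      by_cases hne : x = x₀
      · simp [hne]
      · have hvS : (‖x - x₀‖⁻¹ • (x - x₀) : EuclideanSpace ℂ (Fin n)) ∈ closure S :=
          subset_closure ⟨x, hx, hne, rfl⟩
        have hpos : (0:ℝ) < ‖x - x₀‖ := by rwa [norm_pos_iff, sub_ne_zero]
        have hle : ‖π v₀‖ ≤ ‖x - x₀‖⁻¹ * ‖π x - π x₀‖ := by
          have h' := hmin hvS
          have h'' : ‖π v₀‖ ≤ ‖π (‖x - x₀‖⁻¹ • (x - x₀))‖ := h'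
          rwa [keynorm x hne] at h''
        calc ‖π v₀‖ * ‖x - x₀‖ ≤ (‖x - x₀‖⁻¹ * ‖π x - π x₀‖) * ‖x - x₀‖ := by
              exact mul_le_mul_of_nonneg_right hle (norm_nonneg _)
          _ = ‖π x - π x₀‖ := by field_simp
    · refine ⟨1, one_pos, fun x hx => ?_⟩
      by_cases hne : x = x₀
      · simp [hne]
      · have hmem : (‖x - x₀‖⁻¹ • (x - x₀) : EuclideanSpace ℂ (Fin n)) ∈ S :=
          ⟨x, hx, hne, rfl⟩
        exact absurd (subset_closure hmem) (fun h => hSne ⟨_, h⟩)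
end

section
/- Let X ⊆ ℝⁿ be a closed subset, let x₀ ∈ X, and let π : ℝⁿ → ℝˡ be a surjective ℝ-linear map. Let Σ₀ denote the closure, in the unit sphere of ℝⁿ, of the set of secant directions {(x − x₀)/‖x − x₀‖ : x ∈ X, x ≠ x₀}. Then the following are equivalent: (i) there exists c > 0 such that c·‖x − x₀‖ ≤ ‖π(x) − π(x₀)‖ for all x ∈ X (equivalently, π restricted to X satisfies the two-sided semi-bi-Lipschitz estimate at x₀, the upper bound ‖π(x) − π(x₀)‖ ≤ ‖π‖·‖x − x₀‖ being automatic); (ii) Σ₀ ∩ ker π = ∅. -/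
/-- For a closed `X ⊆ ℝⁿ`, `x₀ ∈ X`, and a surjective `ℝ`-linear projection
`π : ℝⁿ → ℝˡ`, the restriction `π|_X` is semi-bi-Lipschitz at `x₀` (i.e. admits a lower bound
`c·‖x - x₀‖ ≤ ‖π x - π x₀‖` on `X`, the upper bound being automatic) if and only if the closure
`Σ₀` of the set of secant directions of `X` through `x₀` is disjoint from `ker π`. -/
theorem stmt_2 (n l : ℕ) (X : Set (EuclideanSpace ℝ (Fin n))) (hXcl : IsClosed X)
    (x₀ : EuclideanSpace ℝ (Fin n)) (hx₀ : x₀ ∈ X)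
    (π : EuclideanSpace ℝ (Fin n) →L[ℝ] EuclideanSpace ℝ (Fin l))
    (hsurj : Function.Surjective π) :
    (∃ c : ℝ, 0 < c ∧ ∀ x ∈ X, c * ‖x - x₀‖ ≤ ‖π x - π x₀‖) ↔
      closure {v : EuclideanSpace ℝ (Fin n) |
          ∃ x ∈ X, x ≠ x₀ ∧ v = ‖x - x₀‖⁻¹ • (x - x₀)} ∩
        {v : EuclideanSpace ℝ (Fin n) | π v = 0} = ∅ := by
  set S : Set (EuclideanSpace ℝ (Fin n)) :=
    {v : EuclideanSpace ℝ (Fin n) | ∃ x ∈ X, x ≠ x₀ ∧ v = ‖x - x₀‖⁻¹ • (x - x₀)} with hS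
  -- key computation: for a secant direction, ‖π u‖ = ‖x-x₀‖⁻¹ * ‖π x - π x₀‖
  have hkey : ∀ x : EuclideanSpace ℝ (Fin n), x ≠ x₀ →
      ‖π (‖x - x₀‖⁻¹ • (x - x₀))‖ = ‖x - x₀‖⁻¹ * ‖π x - π x₀‖ := by
    intro x hx
    have hne : ‖x - x₀‖ ≠ 0 := by
      simpa [sub_eq_zero] using hx
    rw [map_smul, norm_smul, map_sub]
    simp [abs_of_nonneg (inv_nonneg.mpr (norm_nonneg _))]
  constructor
  · rintro ⟨c, hc, h⟩
    rw [Set.eq_empty_iff_forall_notMem]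
    rintro v ⟨hvK, hv0⟩
    have hclosed : IsClosed {u : EuclideanSpace ℝ (Fin n) | c ≤ ‖π u‖} := by
      have : Continuous fun u : EuclideanSpace ℝ (Fin n) => ‖π u‖ :=
        π.continuous.norm
      exact isClosed_le continuous_const this
    have hsub : S ⊆ {u | c ≤ ‖π u‖} := by
      rintro u ⟨x, hxX, hxne, rfl⟩
      have hpos : 0 < ‖x - x₀‖ := by
        simpa [sub_eq_zero] using hxne
      have := h x hxX
      rw [Set.mem_setOf_eq, hkey x hxne]
      rw [← mul_le_mul_iff_right₀ hpos]
      calc ‖x - x₀‖ * c = c * ‖x - x₀‖ := by ring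
        _ ≤ ‖π x - π x₀‖ := this
        _ = ‖x - x₀‖ * (‖x - x₀‖⁻¹ * ‖π x - π x₀‖) := by
            field_simp
    have : c ≤ ‖π v‖ := (hclosed.closure_subset_iff.mpr hsub) hvK
    rw [Set.mem_setOf_eq] at hv0
    rw [hv0, norm_zero] at this
    linarith
  · intro hdis
    by_cases hSe : S = ∅
    · refine ⟨1, one_pos, fun x hxX => ?_⟩
      by_cases hx : x = x₀
      · simp [hx]
      · exfalso
        have : (‖x - x₀‖⁻¹ • (x - x₀)) ∈ S := ⟨x, hxX, hx, rfl⟩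
        rw [hSe] at this
        exact this
    · have hSne : S.Nonempty := Set.nonempty_iff_ne_empty.mpr hSe
      have hbdd : Bornology.IsBounded S := by
        apply Bornology.IsBounded.subset (Metric.isBounded_closedBall (x := (0 : EuclideanSpace ℝ (Fin n))) (r := 1))
        rintro u ⟨x, hxX, hxne, rfl⟩
        have hne : ‖x - x₀‖ ≠ 0 := by simpa [sub_eq_zero] using hxne
        simp only [Metric.mem_closedBall, dist_zero_right, norm_smul,
          norm_inv, norm_norm]
        rw [inv_mul_cancel₀ hne]
      have hK : IsCompact (closure S) :=
        Metric.isCompact_of_isClosed_isBounded isClosed_closure hbdd.closure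
      obtain ⟨v₀, hv₀, hmin⟩ := hK.exists_isMinOn hSne.closure
        (π.continuous.norm.continuousOn)
      have hc : 0 < ‖π v₀‖ := by
        rcases (norm_nonneg (π v₀)).lt_or_eq with h | h
        · exact h
        · exfalso
          have : v₀ ∈ closure S ∩ {v | π v = 0} :=
            ⟨hv₀, norm_eq_zero.mp h.symm⟩
          rw [hdis] at this
          exact this
      refine ⟨‖π v₀‖, hc, fun x hxX => ?_⟩
      by_cases hx : x = x₀
      · simp [hx]
      · have hpos : 0 < ‖x - x₀‖ := by simpa [sub_eq_zero] using hx
        have hu : (‖x - x₀‖⁻¹ • (x - x₀)) ∈ closure S :=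
          subset_closure ⟨x, hxX, hx, rfl⟩
        have : ‖π v₀‖ ≤ ‖π (‖x - x₀‖⁻¹ • (x - x₀))‖ := hmin hu
        rw [hkey x hx] at this
        calc ‖π v₀‖ * ‖x - x₀‖ ≤ (‖x - x₀‖⁻¹ * ‖π x - π x₀‖) * ‖x - x₀‖ := by
              exact mul_le_mul_of_nonneg_right this (norm_nonneg _)
          _ = ‖π x - π x₀‖ := by field_simp
end

section
/- Let X ⊆ ℝⁿ be a subset, let x₀ ∈ X, and let π : ℝⁿ → ℝˡ be an ℝ-linear map for which there exists c > 0 with c·‖x − x₀‖ ≤ ‖π(x) − π(x₀)‖ for all x ∈ X. Then the kernel of π meets the tangent cone of X at x₀ only at the origin: if v ∈ C(X, x₀) and π(v) = 0, then v = 0. Moreover, ‖π(v)‖ ≥ c·‖v‖ for every v ∈ C(X, x₀). -/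
/-- If `X ⊆ ℝⁿ`, `x₀ ∈ X`, and `π : ℝⁿ → ℝˡ` is an `ℝ`-linear map with
`c·‖x - x₀‖ ≤ ‖π x - π x₀‖` on `X` for some `c > 0`, then `ker π` meets the tangent cone
`C(X, x₀)` only at the origin, and moreover `‖π v‖ ≥ c·‖v‖` for every `v ∈ C(X, x₀)`. -/
theorem stmt_4 (n l : ℕ) (X : Set (EuclideanSpace ℝ (Fin n)))
    (x₀ : EuclideanSpace ℝ (Fin n)) (hx₀ : x₀ ∈ X)
    (π : EuclideanSpace ℝ (Fin n) →ₗ[ℝ] EuclideanSpace ℝ (Fin l))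
    (c : ℝ) (hc : 0 < c)
    (hlow : ∀ x ∈ X, c * ‖x - x₀‖ ≤ ‖π x - π x₀‖) :
    (∀ v ∈ tangentConeAt ℝ X x₀, π v = 0 → v = 0) ∧
    (∀ v ∈ tangentConeAt ℝ X x₀, c * ‖v‖ ≤ ‖π v‖) := by
  have key : ∀ v ∈ tangentConeAt ℝ X x₀, c * ‖v‖ ≤ ‖π v‖ := by
    intro v hv
    obtain ⟨C, d, hC, hd, hcd⟩ := mem_tangentConeAt_iff_exists_seq.mp hv
    have hπcont : Continuous π := π.continuous_of_finiteDimensional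
    have h1 : Filter.Tendsto (fun i => c * ‖C i • d i‖) Filter.atTop (nhds (c * ‖v‖)) :=
      (hcd.norm).const_mul c
    have h2 : Filter.Tendsto (fun i => ‖π (C i • d i)‖) Filter.atTop (nhds ‖π v‖) :=
      ((hπcont.tendsto v).comp hcd).norm
    refine le_of_tendsto_of_tendsto h1 h2 ?_
    filter_upwards [hd] with i hi
    have hbase : c * ‖d i‖ ≤ ‖π (d i)‖ := by
      have := hlow (x₀ + d i) hi
      simpa [map_add] using this
    calc c * ‖C i • d i‖ = ‖C i‖ * (c * ‖d i‖) := by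
            rw [norm_smul]; ring
      _ ≤ ‖C i‖ * ‖π (d i)‖ :=
            mul_le_mul_of_nonneg_left hbase (norm_nonneg _)
      _ = ‖π (C i • d i)‖ := by rw [map_smul, norm_smul]
  refine ⟨fun v hv h0 => ?_, key⟩
  have := key v hv
  rw [h0, norm_zero] at this
  have : ‖v‖ ≤ 0 := by nlinarith [norm_nonneg v]
  simpa [norm_le_zero_iff] using this
end

section
/- Let X ⊆ ℝⁿ be a subset with 0 ∈ X, let ψ : X → ℝᵐ satisfy ψ(0) = 0 and ‖ψ(x)‖ ≤ C·‖x‖ for all x ∈ X (for some constant C > 0), and let Γ = {(x, ψ(x)) : x ∈ X} ⊆ ℝⁿ × ℝᵐ be the graph of ψ. Let π : ℝⁿ → ℝᵈ be an ℝ-linear map such that ker π ∩ C(X, 0) = {0}, and define π̃ : ℝⁿ × ℝᵐ → ℝᵈ by π̃(x, y) = π(x). Then π̃⁻¹(0) ∩ C(Γ, (0,0)) = {0}; that is, if (u, w) ∈ C(Γ, (0,0)) and π(u) = 0, then (u, w) = (0, 0). -/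
/-- Let `X ⊆ ℝⁿ` with `0 ∈ X`, let `ψ : X → ℝᵐ` satisfy `ψ 0 = 0` and
`‖ψ x‖ ≤ C·‖x‖` on `X`, and let `Γ` be the graph of `ψ`. If `π : ℝⁿ → ℝᵈ` is `ℝ`-linear with
`ker π ∩ C(X, 0) = {0}`, and `π̃(x, y) = π x`, then `π̃⁻¹(0) ∩ C(Γ, (0,0)) = {0}`; i.e. if
`(u, w) ∈ C(Γ, (0,0))` and `π u = 0`, then `(u, w) = (0, 0)`. -/
theorem stmt_6 (n m d : ℕ) (X : Set (EuclideanSpace ℝ (Fin n))) (h0X : (0 : EuclideanSpace ℝ (Fin n)) ∈ X)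
    (ψ : EuclideanSpace ℝ (Fin n) → EuclideanSpace ℝ (Fin m))
    (hψ0 : ψ 0 = 0) (C : ℝ) (hC : 0 < C)
    (hψ : ∀ x ∈ X, ‖ψ x‖ ≤ C * ‖x‖)
    (π : EuclideanSpace ℝ (Fin n) →ₗ[ℝ] EuclideanSpace ℝ (Fin d))
    (hker : ∀ v ∈ tangentConeAt ℝ X 0, π v = 0 → v = 0) :
    ∀ u : EuclideanSpace ℝ (Fin n), ∀ w : EuclideanSpace ℝ (Fin m),
      (u, w) ∈ tangentConeAt ℝ
          {q : EuclideanSpace ℝ (Fin n) × EuclideanSpace ℝ (Fin m) |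
            q.1 ∈ X ∧ q.2 = ψ q.1} ((0, 0) : EuclideanSpace ℝ (Fin n) × EuclideanSpace ℝ (Fin m)) →
        π u = 0 → (u = 0 ∧ w = 0) := by
  intro u w hmem hπu
  obtain ⟨c, dd, hc, hmem', hlim⟩ := mem_tangentConeAt_iff_exists_seq_norm_tendsto_atTop.mp hmem
  -- components
  have hmemX : ∀ᶠ i in Filter.atTop, (0 : EuclideanSpace ℝ (Fin n)) + (dd i).1 ∈ X := by
    filter_upwards [hmem'] with i hi
    simpa using hi.1
  have hlim1 : Filter.Tendsto (fun i => c i • (dd i).1) Filter.atTop (nhds u) := by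
    have := (continuous_fst.tendsto _).comp hlim
    simpa [Function.comp_def] using this
  have hu : u ∈ tangentConeAt ℝ X 0 := mem_tangentConeAt_iff_exists_seq_norm_tendsto_atTop.mpr ⟨c, fun i => (dd i).1, hc, hmemX, hlim1⟩
  have hu0 : u = 0 := hker u hu hπu
  refine ⟨hu0, ?_⟩
  -- second component tends to w, but norm bounded by C * norm of first which tends to 0
  have hlim2 : Filter.Tendsto (fun i => c i • (dd i).2) Filter.atTop (nhds w) := by
    have := (continuous_snd.tendsto _).comp hlim
    simpa [Function.comp_def] using this
  have hnorm : Filter.Tendsto (fun i => ‖c i • (dd i).2‖) Filter.atTop (nhds 0) := by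
    have h1 : Filter.Tendsto (fun i => C * ‖c i • (dd i).1‖) Filter.atTop (nhds 0) := by
      have : Filter.Tendsto (fun i => ‖c i • (dd i).1‖) Filter.atTop (nhds ‖(0 : EuclideanSpace ℝ (Fin n))‖) := by
        exact (continuous_norm.tendsto _).comp (hu0 ▸ hlim1)
      simpa using this.const_mul C
    have hbound : ∀ᶠ i in Filter.atTop, ‖c i • (dd i).2‖ ≤ C * ‖c i • (dd i).1‖ := by
      filter_upwards [hmem'] with i hi
      obtain ⟨hiX, hiψ⟩ := hi
      simp only [Prod.fst_add, Prod.snd_add, Prod.fst_zero, Prod.snd_zero, zero_add] at hiX hiψ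
      have : ‖(dd i).2‖ ≤ C * ‖(dd i).1‖ := hiψ ▸ hψ _ hiX
      calc ‖c i • (dd i).2‖ = ‖c i‖ * ‖(dd i).2‖ := norm_smul _ _
        _ ≤ ‖c i‖ * (C * ‖(dd i).1‖) := by
            exact mul_le_mul_of_nonneg_left this (norm_nonneg _)
        _ = C * ‖c i • (dd i).1‖ := by rw [norm_smul]; ring
    exact squeeze_zero' (Filter.Eventually.of_forall fun i => norm_nonneg _) hbound h1
  have hw : w = 0 := by
    have := hnorm
    have h2 : Filter.Tendsto (fun i => ‖c i • (dd i).2‖) Filter.atTop (nhds ‖w‖) :=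
      (continuous_norm.tendsto _).comp hlim2
    have : ‖w‖ = 0 := tendsto_nhds_unique h2 hnorm
    simpa using this
  exact hw
end

section
/- Define g₁, g₂ : ℝ² → ℝ by g₁(x, y) = y³/(x² + y²) and g₂(x, y) = y⁵/(x⁴ + y⁴) for (x, y) ≠ (0, 0), and g₁(0, 0) = g₂(0, 0) = 0, and define h : ℝ³ → ℝ³ by h(x, y, z) = (x, y, z − g₁(x, y) + g₂(x, y)). Then h is a bijection of ℝ³ with inverse h⁻¹(x, y, z) = (x, y, z + g₁(x, y) − g₂(x, y)), h(0, 0, 0) = (0, 0, 0), and both h and h⁻¹ are Lipschitz; that is, h is a bi-Lipschitz homeomorphism of ℝ³ fixing the origin. -/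
open Classical

private lemma nn3 : ((3 : NNReal) : ℝ) = 3 := by norm_num
private lemma nn5 : ((5 : NNReal) : ℝ) = 5 := by norm_num

private lemma aux1x (y : ℝ) (hy : y ≠ 0) :
    LipschitzWith 3 (fun x : ℝ => y ^ 3 / (x ^ 2 + y ^ 2)) := by
  have hpos : ∀ x : ℝ, (0:ℝ) < x ^ 2 + y ^ 2 := fun x => by positivity
  apply lipschitzWith_of_nnnorm_deriv_le
  · intro x
    exact (differentiableAt_const _).div (by fun_prop) (hpos x).ne'
  · intro x
    have h1 : HasDerivAt (fun x : ℝ => x ^ 2 + y ^ 2) (2 * x) x := by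
      simpa using (hasDerivAt_pow 2 x).add_const (y ^ 2)
    have hd : HasDerivAt (fun x : ℝ => y ^ 3 / (x ^ 2 + y ^ 2))
        ((0 * (x ^ 2 + y ^ 2) - y ^ 3 * (2 * x)) / (x ^ 2 + y ^ 2) ^ 2) x :=
      (hasDerivAt_const x (y ^ 3)).div h1 (hpos x).ne'
    rw [← NNReal.coe_le_coe, coe_nnnorm, Real.norm_eq_abs, nn3, hd.deriv, abs_div,
      abs_of_nonneg (by positivity : (0:ℝ) ≤ (x ^ 2 + y ^ 2) ^ 2),
      div_le_iff₀ (by positivity), abs_le]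
    constructor <;> nlinarith [sq_nonneg (x*y - y^2), sq_nonneg (x*y + y^2), sq_nonneg x,
      sq_nonneg y, sq_nonneg (x^2 - y^2), sq_nonneg (x^2 + y^2), sq_nonneg (x*y)]

private lemma aux1y (x : ℝ) (hx : x ≠ 0) :
    LipschitzWith 3 (fun y : ℝ => y ^ 3 / (x ^ 2 + y ^ 2)) := by
  have hpos : ∀ y : ℝ, (0:ℝ) < x ^ 2 + y ^ 2 := fun y => by positivity
  apply lipschitzWith_of_nnnorm_deriv_le
  · intro y
    exact (differentiableAt_pow 3).div (by fun_prop) (hpos y).ne'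
  · intro y
    have h1 : HasDerivAt (fun y : ℝ => x ^ 2 + y ^ 2) (2 * y) y := by
      simpa using (hasDerivAt_pow 2 y).const_add (x ^ 2)
    have h2 : HasDerivAt (fun y : ℝ => y ^ 3) (3 * y ^ 2) y := by
      simpa using hasDerivAt_pow 3 y
    have hd : HasDerivAt (fun y : ℝ => y ^ 3 / (x ^ 2 + y ^ 2))
        ((3 * y ^ 2 * (x ^ 2 + y ^ 2) - y ^ 3 * (2 * y)) / (x ^ 2 + y ^ 2) ^ 2) y :=
      h2.div h1 (hpos y).ne'
    rw [← NNReal.coe_le_coe, coe_nnnorm, Real.norm_eq_abs, nn3, hd.deriv, abs_div,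
      abs_of_nonneg (by positivity : (0:ℝ) ≤ (x ^ 2 + y ^ 2) ^ 2),
      div_le_iff₀ (by positivity), abs_le]
    constructor <;> nlinarith [sq_nonneg (x*y), sq_nonneg x, sq_nonneg y, sq_nonneg (x^2 + y^2)]

private lemma aux2x (y : ℝ) (hy : y ≠ 0) :
    LipschitzWith 5 (fun x : ℝ => y ^ 5 / (x ^ 4 + y ^ 4)) := by
  have hpos : ∀ x : ℝ, (0:ℝ) < x ^ 4 + y ^ 4 := fun x => by positivity
  apply lipschitzWith_of_nnnorm_deriv_le
  · intro x
    exact (differentiableAt_const _).div (by fun_prop) (hpos x).ne'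
  · intro x
    have h1 : HasDerivAt (fun x : ℝ => x ^ 4 + y ^ 4) (4 * x ^ 3) x := by
      simpa using (hasDerivAt_pow 4 x).add_const (y ^ 4)
    have hd : HasDerivAt (fun x : ℝ => y ^ 5 / (x ^ 4 + y ^ 4))
        ((0 * (x ^ 4 + y ^ 4) - y ^ 5 * (4 * x ^ 3)) / (x ^ 4 + y ^ 4) ^ 2) x :=
      (hasDerivAt_const x (y ^ 5)).div h1 (hpos x).ne'
    rw [← NNReal.coe_le_coe, coe_nnnorm, Real.norm_eq_abs, nn5, hd.deriv, abs_div,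
      abs_of_nonneg (by positivity : (0:ℝ) ≤ (x ^ 4 + y ^ 4) ^ 2),
      div_le_iff₀ (by positivity), abs_le]
    constructor <;> nlinarith [sq_nonneg (x^3*y - y^4), sq_nonneg (x^3*y + y^4),
      sq_nonneg (x^4 - x^2*y^2), sq_nonneg (x^2*y^2), sq_nonneg (x^4 + y^4),
      sq_nonneg (x^4 - y^4), sq_nonneg x, sq_nonneg y]

private lemma aux2y (x : ℝ) (hx : x ≠ 0) :
    LipschitzWith 5 (fun y : ℝ => y ^ 5 / (x ^ 4 + y ^ 4)) := by
  have hpos : ∀ y : ℝ, (0:ℝ) < x ^ 4 + y ^ 4 := fun y => by positivity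
  apply lipschitzWith_of_nnnorm_deriv_le
  · intro y
    exact (differentiableAt_pow 5).div (by fun_prop) (hpos y).ne'
  · intro y
    have h1 : HasDerivAt (fun y : ℝ => x ^ 4 + y ^ 4) (4 * y ^ 3) y := by
      simpa using (hasDerivAt_pow 4 y).const_add (x ^ 4)
    have h2 : HasDerivAt (fun y : ℝ => y ^ 5) (5 * y ^ 4) y := by
      simpa using hasDerivAt_pow 5 y
    have hd : HasDerivAt (fun y : ℝ => y ^ 5 / (x ^ 4 + y ^ 4))
        ((5 * y ^ 4 * (x ^ 4 + y ^ 4) - y ^ 5 * (4 * y ^ 3)) / (x ^ 4 + y ^ 4) ^ 2) y :=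
      h2.div h1 (hpos y).ne'
    rw [← NNReal.coe_le_coe, coe_nnnorm, Real.norm_eq_abs, nn5, hd.deriv, abs_div,
      abs_of_nonneg (by positivity : (0:ℝ) ≤ (x ^ 4 + y ^ 4) ^ 2),
      div_le_iff₀ (by positivity), abs_le]
    constructor <;> nlinarith [sq_nonneg (x^2*y^2), sq_nonneg x, sq_nonneg y,
      sq_nonneg (x^4 + y^4), sq_nonneg (x^4 - y^4)]

private lemma lip_dist {K : NNReal} {f : ℝ → ℝ} (hf : LipschitzWith K f) (x u : ℝ) :
    |f x - f u| ≤ (K : ℝ) * |x - u| := by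
  have := hf.dist_le_mul x u
  simpa [Real.dist_eq] using this

private lemma g1_lip (g₁ : ℝ → ℝ → ℝ)
    (hg₁ : ∀ x y : ℝ, g₁ x y = if x = 0 ∧ y = 0 then 0 else y ^ 3 / (x ^ 2 + y ^ 2))
    (x y u v : ℝ) : |g₁ x y - g₁ u v| ≤ 3 * |x - u| + 3 * |y - v| := by
  have hzero : ∀ x : ℝ, g₁ x 0 = 0 := by
    intro x; rw [hg₁]; by_cases hx : x = 0 <;> simp [hx]
  have hxz : ∀ y : ℝ, g₁ 0 y = y := by
    intro y; rw [hg₁]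
    rcases eq_or_ne y 0 with hy | hy
    · simp [hy]
    · rw [if_neg (by simp [hy])]
      field_simp
      ring
  have step1 : |g₁ x y - g₁ u y| ≤ 3 * |x - u| := by
    rcases eq_or_ne y 0 with hy | hy
    · rw [hy, hzero, hzero]; simp
    · have h1 : g₁ x y = y ^ 3 / (x ^ 2 + y ^ 2) := by rw [hg₁, if_neg (by simp [hy])]
      have h2 : g₁ u y = y ^ 3 / (u ^ 2 + y ^ 2) := by rw [hg₁, if_neg (by simp [hy])]
      rw [h1, h2]
      have := lip_dist (aux1x y hy) x u
      rwa [nn3] at this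
  have step2 : |g₁ u y - g₁ u v| ≤ 3 * |y - v| := by
    rcases eq_or_ne u 0 with hu | hu
    · rw [hu, hxz, hxz]
      nlinarith [abs_nonneg (y - v)]
    · have h1 : g₁ u y = y ^ 3 / (u ^ 2 + y ^ 2) := by rw [hg₁, if_neg (by simp [hu])]
      have h2 : g₁ u v = v ^ 3 / (u ^ 2 + v ^ 2) := by rw [hg₁, if_neg (by simp [hu])]
      rw [h1, h2]
      have := lip_dist (aux1y u hu) y v
      rwa [nn3] at this
  calc |g₁ x y - g₁ u v| ≤ |g₁ x y - g₁ u y| + |g₁ u y - g₁ u v| := by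
        have := abs_sub_le (g₁ x y) (g₁ u y) (g₁ u v); linarith
    _ ≤ 3 * |x - u| + 3 * |y - v| := add_le_add step1 step2

private lemma g2_lip (g₂ : ℝ → ℝ → ℝ)
    (hg₂ : ∀ x y : ℝ, g₂ x y = if x = 0 ∧ y = 0 then 0 else y ^ 5 / (x ^ 4 + y ^ 4))
    (x y u v : ℝ) : |g₂ x y - g₂ u v| ≤ 5 * |x - u| + 5 * |y - v| := by
  have hzero : ∀ x : ℝ, g₂ x 0 = 0 := by
    intro x; rw [hg₂]; by_cases hx : x = 0 <;> simp [hx]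
  have hxz : ∀ y : ℝ, g₂ 0 y = y := by
    intro y; rw [hg₂]
    rcases eq_or_ne y 0 with hy | hy
    · simp [hy]
    · rw [if_neg (by simp [hy])]
      field_simp
      ring
  have step1 : |g₂ x y - g₂ u y| ≤ 5 * |x - u| := by
    rcases eq_or_ne y 0 with hy | hy
    · rw [hy, hzero, hzero]; simp
    · have h1 : g₂ x y = y ^ 5 / (x ^ 4 + y ^ 4) := by rw [hg₂, if_neg (by simp [hy])]
      have h2 : g₂ u y = y ^ 5 / (u ^ 4 + y ^ 4) := by rw [hg₂, if_neg (by simp [hy])]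
      rw [h1, h2]
      have := lip_dist (aux2x y hy) x u
      rwa [nn5] at this
  have step2 : |g₂ u y - g₂ u v| ≤ 5 * |y - v| := by
    rcases eq_or_ne u 0 with hu | hu
    · rw [hu, hxz, hxz]
      nlinarith [abs_nonneg (y - v)]
    · have h1 : g₂ u y = y ^ 5 / (u ^ 4 + y ^ 4) := by rw [hg₂, if_neg (by simp [hu])]
      have h2 : g₂ u v = v ^ 5 / (u ^ 4 + v ^ 4) := by rw [hg₂, if_neg (by simp [hu])]
      rw [h1, h2]
      have := lip_dist (aux2y u hu) y v
      rwa [nn5] at this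
  calc |g₂ x y - g₂ u v| ≤ |g₂ x y - g₂ u y| + |g₂ u y - g₂ u v| := by
        have := abs_sub_le (g₂ x y) (g₂ u y) (g₂ u v); linarith
    _ ≤ 5 * |x - u| + 5 * |y - v| := add_le_add step1 step2

/-- Norm of a 3-vector difference in terms of coordinates. -/
private lemma norm3 (w : EuclideanSpace ℝ (Fin 3)) :
    ‖w‖ = Real.sqrt ((w 0) ^ 2 + (w 1) ^ 2 + (w 2) ^ 2) := by
  rw [EuclideanSpace.norm_eq]
  congr 1
  rw [Fin.sum_univ_three]
  simp [Real.norm_eq_abs, sq_abs]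

/-- With `g₁(x,y) = y³/(x² + y²)`, `g₂(x,y) = y⁵/(x⁴ + y⁴)` (both `0` at the
origin), the map `h(x,y,z) = (x, y, z - g₁(x,y) + g₂(x,y))` is a bijection of `ℝ³` with inverse
`(x,y,z) ↦ (x, y, z + g₁(x,y) - g₂(x,y))`, fixes the origin, and both `h` and its inverse are
Lipschitz; i.e. `h` is a bi-Lipschitz homeomorphism of `ℝ³` fixing the origin. -/
theorem stmt_10 (g₁ g₂ : ℝ → ℝ → ℝ)
    (hg₁ : ∀ x y : ℝ, g₁ x y = if x = 0 ∧ y = 0 then 0 else y ^ 3 / (x ^ 2 + y ^ 2))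
    (hg₂ : ∀ x y : ℝ, g₂ x y = if x = 0 ∧ y = 0 then 0 else y ^ 5 / (x ^ 4 + y ^ 4))
    (h hinv : EuclideanSpace ℝ (Fin 3) → EuclideanSpace ℝ (Fin 3))
    (hh : ∀ p : EuclideanSpace ℝ (Fin 3),
      h p = (WithLp.toLp 2 ![p 0, p 1, p 2 - g₁ (p 0) (p 1) + g₂ (p 0) (p 1)] : EuclideanSpace ℝ (Fin 3)))
    (hhinv : ∀ p : EuclideanSpace ℝ (Fin 3),
      hinv p = (WithLp.toLp 2 ![p 0, p 1, p 2 + g₁ (p 0) (p 1) - g₂ (p 0) (p 1)] : EuclideanSpace ℝ (Fin 3))) :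
    Function.Bijective h ∧
    (∀ p : EuclideanSpace ℝ (Fin 3), hinv (h p) = p) ∧
    (∀ p : EuclideanSpace ℝ (Fin 3), h (hinv p) = p) ∧
    h 0 = 0 ∧
    (∃ K : ℝ, 0 < K ∧ ∀ p q : EuclideanSpace ℝ (Fin 3), ‖h p - h q‖ ≤ K * ‖p - q‖) ∧
    (∃ K : ℝ, 0 < K ∧ ∀ p q : EuclideanSpace ℝ (Fin 3), ‖hinv p - hinv q‖ ≤ K * ‖p - q‖) := by
  -- coordinate values
  have hc : ∀ p : EuclideanSpace ℝ (Fin 3),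
      h p 0 = p 0 ∧ h p 1 = p 1 ∧ h p 2 = p 2 - g₁ (p 0) (p 1) + g₂ (p 0) (p 1) := by
    intro p; rw [hh]; exact ⟨rfl, rfl, rfl⟩
  have hc' : ∀ p : EuclideanSpace ℝ (Fin 3),
      hinv p 0 = p 0 ∧ hinv p 1 = p 1 ∧ hinv p 2 = p 2 + g₁ (p 0) (p 1) - g₂ (p 0) (p 1) := by
    intro p; rw [hhinv]; exact ⟨rfl, rfl, rfl⟩
  have hleft : ∀ p : EuclideanSpace ℝ (Fin 3), hinv (h p) = p := by
    intro p
    ext i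
    obtain ⟨e0, e1, e2⟩ := hc p
    obtain ⟨f0, f1, f2⟩ := hc' (h p)
    fin_cases i
    · show hinv (h p) 0 = p 0
      rw [f0, e0]
    · show hinv (h p) 1 = p 1
      rw [f1, e1]
    · show hinv (h p) 2 = p 2
      rw [f2, e0, e1, e2]; ring
  have hright : ∀ p : EuclideanSpace ℝ (Fin 3), h (hinv p) = p := by
    intro p
    ext i
    obtain ⟨e0, e1, e2⟩ := hc' p
    obtain ⟨f0, f1, f2⟩ := hc (hinv p)
    fin_cases i
    · show h (hinv p) 0 = p 0
      rw [f0, e0]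
    · show h (hinv p) 1 = p 1
      rw [f1, e1]
    · show h (hinv p) 2 = p 2
      rw [f2, e0, e1, e2]; ring
  have hbij : Function.Bijective h :=
    ⟨Function.LeftInverse.injective hleft, Function.RightInverse.surjective hright⟩
  -- origin
  have hg10 : g₁ 0 0 = 0 := by rw [hg₁]; simp
  have hg20 : g₂ 0 0 = 0 := by rw [hg₂]; simp
  have horig : h 0 = 0 := by
    ext i
    obtain ⟨e0, e1, e2⟩ := hc 0
    have z0 : (0 : EuclideanSpace ℝ (Fin 3)) 0 = 0 := rfl
    have z1 : (0 : EuclideanSpace ℝ (Fin 3)) 1 = 0 := rfl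
    have z2 : (0 : EuclideanSpace ℝ (Fin 3)) 2 = 0 := rfl
    fin_cases i
    · show h 0 0 = (0 : EuclideanSpace ℝ (Fin 3)) 0
      rw [e0]
    · show h 0 1 = (0 : EuclideanSpace ℝ (Fin 3)) 1
      rw [e1]
    · show h 0 2 = (0 : EuclideanSpace ℝ (Fin 3)) 2
      rw [e2, z0, z1, z2, hg10, hg20]; ring
  -- Lipschitz bound, generic for both maps
  have key : ∀ (f : EuclideanSpace ℝ (Fin 3) → EuclideanSpace ℝ (Fin 3)) (s : ℝ),
      s = 1 ∨ s = -1 →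
      (∀ p : EuclideanSpace ℝ (Fin 3), f p 0 = p 0 ∧ f p 1 = p 1 ∧
        f p 2 = p 2 + s * (g₁ (p 0) (p 1) - g₂ (p 0) (p 1))) →
      ∀ p q : EuclideanSpace ℝ (Fin 3), ‖f p - f q‖ ≤ 17 * ‖p - q‖ := by
    intro f s hs hf p q
    obtain ⟨e0, e1, e2⟩ := hf p
    obtain ⟨f0, f1, f2⟩ := hf q
    set a := p 0 - q 0 with ha
    set b := p 1 - q 1 with hb
    set c := p 2 - q 2 with hcv
    set d := s * ((g₁ (p 0) (p 1) - g₁ (q 0) (q 1)) - (g₂ (p 0) (p 1) - g₂ (q 0) (q 1))) with hd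
    have habs : |d| ≤ 8 * |a| + 8 * |b| := by
      have hs1 : |s| = 1 := by rcases hs with h | h <;> simp [h]
      have h1 := g1_lip g₁ hg₁ (p 0) (p 1) (q 0) (q 1)
      have h2 := g2_lip g₂ hg₂ (p 0) (p 1) (q 0) (q 1)
      have : |d| ≤ |g₁ (p 0) (p 1) - g₁ (q 0) (q 1)| + |g₂ (p 0) (p 1) - g₂ (q 0) (q 1)| := by
        rw [hd, abs_mul, hs1, one_mul]
        exact abs_sub _ _
      rw [ha, hb]
      linarith
    have hsub : ∀ i : Fin 3, (f p - f q) i = f p i - f q i := fun i => rfl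
    have hsub' : ∀ i : Fin 3, (p - q) i = p i - q i := fun i => rfl
    have en : ‖f p - f q‖ = Real.sqrt (a ^ 2 + b ^ 2 + (c + d) ^ 2) := by
      rw [norm3, hsub 0, hsub 1, hsub 2, e0, e1, e2, f0, f1, f2]
      congr 1
      rw [ha, hb, hcv, hd]
      ring
    have en' : ‖p - q‖ = Real.sqrt (a ^ 2 + b ^ 2 + c ^ 2) := by
      rw [norm3, hsub' 0, hsub' 1, hsub' 2]
    rw [en, en']
    have hle : a ^ 2 + b ^ 2 + (c + d) ^ 2 ≤ 289 * (a ^ 2 + b ^ 2 + c ^ 2) := by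
      have hd2 : d ^ 2 ≤ 128 * (a ^ 2 + b ^ 2) := by
        have h8 : (8 * |a| + 8 * |b|) ^ 2 ≤ 128 * (a ^ 2 + b ^ 2) := by
          nlinarith [sq_nonneg (|a| - |b|), sq_abs a, sq_abs b]
        calc d ^ 2 = |d| ^ 2 := (sq_abs d).symm
          _ ≤ (8 * |a| + 8 * |b|) ^ 2 := by
              apply pow_le_pow_left₀ (abs_nonneg d) habs
          _ ≤ 128 * (a ^ 2 + b ^ 2) := h8
      nlinarith [sq_nonneg (c - d), sq_nonneg (c + d), sq_nonneg c, sq_nonneg d]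
    calc Real.sqrt (a ^ 2 + b ^ 2 + (c + d) ^ 2)
        ≤ Real.sqrt (289 * (a ^ 2 + b ^ 2 + c ^ 2)) := Real.sqrt_le_sqrt hle
      _ = 17 * Real.sqrt (a ^ 2 + b ^ 2 + c ^ 2) := by
          rw [show (289 : ℝ) = 17 ^ 2 by norm_num, Real.sqrt_mul (by positivity),
            Real.sqrt_sq (by norm_num : (0:ℝ) ≤ 17)]
  refine ⟨hbij, hleft, hright, horig, ⟨17, by norm_num, ?_⟩, ⟨17, by norm_num, ?_⟩⟩
  · apply key h (-1) (Or.inr rfl)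
    intro p
    obtain ⟨e0, e1, e2⟩ := hc p
    exact ⟨e0, e1, by rw [e2]; ring⟩
  · apply key hinv 1 (Or.inl rfl)
    intro p
    obtain ⟨e0, e1, e2⟩ := hc' p
    exact ⟨e0, e1, by rw [e2]; ring⟩
end

section
/- Define g₁, g₂ : ℝ² → ℝ by g₁(x, y) = y³/(x² + y²) and g₂(x, y) = y⁵/(x⁴ + y⁴) for (x, y) ≠ (0, 0), and g₁(0, 0) = g₂(0, 0) = 0, and define h : ℝ³ → ℝ³ by h(x, y, z) = (x, y, z − g₁(x, y) + g₂(x, y)). Let X = {(x, y, z) ∈ ℝ³ : z·(x² + y²) = y³} and Y = {(x, y, z) ∈ ℝ³ : z·(x⁴ + y⁴) = y⁵}. Then h maps X onto Y; that is, the image h(X) equals Y. -/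
open Classical

lemma key (x y z : ℝ) :
    z * (x ^ 2 + y ^ 2) = y ^ 3 ↔
      (z - (if x = 0 ∧ y = 0 then 0 else y ^ 3 / (x ^ 2 + y ^ 2))
         + (if x = 0 ∧ y = 0 then 0 else y ^ 5 / (x ^ 4 + y ^ 4))) * (x ^ 4 + y ^ 4)
        = y ^ 5 := by
  by_cases hxy : x = 0 ∧ y = 0
  · simp [hxy.1, hxy.2]
  · have hx : x ≠ 0 ∨ y ≠ 0 := by tauto
    have ha : x ^ 2 + y ^ 2 ≠ 0 := by
      rcases hx with hx | hy
      · positivity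
      · positivity
    have hb : x ^ 4 + y ^ 4 ≠ 0 := by
      rcases hx with hx | hy
      · positivity
      · positivity
    rw [if_neg hxy, if_neg hxy]
    rw [show (z - y ^ 3 / (x ^ 2 + y ^ 2) + y ^ 5 / (x ^ 4 + y ^ 4)) * (x ^ 4 + y ^ 4)
          = (z - y ^ 3 / (x ^ 2 + y ^ 2)) * (x ^ 4 + y ^ 4)
            + (y ^ 5 / (x ^ 4 + y ^ 4)) * (x ^ 4 + y ^ 4) from by ring,
        div_mul_cancel₀ _ hb, add_eq_right, mul_eq_zero, or_iff_left hb, sub_eq_zero,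
        eq_div_iff ha]

/-- With `g₁(x,y) = y³/(x² + y²)`, `g₂(x,y) = y⁵/(x⁴ + y⁴)` (both `0` at the
origin) and `h(x,y,z) = (x, y, z - g₁(x,y) + g₂(x,y))`, the map `h` carries the real algebraic
set `X = {z·(x² + y²) = y³}` onto `Y = {z·(x⁴ + y⁴) = y⁵}`: `h '' X = Y`. -/
theorem stmt_11 (g₁ g₂ : ℝ → ℝ → ℝ)
    (hg₁ : ∀ x y : ℝ, g₁ x y = if x = 0 ∧ y = 0 then 0 else y ^ 3 / (x ^ 2 + y ^ 2))
    (hg₂ : ∀ x y : ℝ, g₂ x y = if x = 0 ∧ y = 0 then 0 else y ^ 5 / (x ^ 4 + y ^ 4))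
    (h : EuclideanSpace ℝ (Fin 3) → EuclideanSpace ℝ (Fin 3))
    (hh : ∀ p : EuclideanSpace ℝ (Fin 3),
      h p = (WithLp.toLp 2 ![p 0, p 1, p 2 - g₁ (p 0) (p 1) + g₂ (p 0) (p 1)] : EuclideanSpace ℝ (Fin 3))) :
    h '' {p : EuclideanSpace ℝ (Fin 3) | p 2 * ((p 0) ^ 2 + (p 1) ^ 2) = (p 1) ^ 3} =
      {p : EuclideanSpace ℝ (Fin 3) | p 2 * ((p 0) ^ 4 + (p 1) ^ 4) = (p 1) ^ 5} := by
  ext p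
  simp only [Set.mem_image, Set.mem_setOf_eq]
  constructor
  · rintro ⟨q, hq, rfl⟩
    rw [hh]
    show (q 2 - g₁ (q 0) (q 1) + g₂ (q 0) (q 1)) * ((q 0) ^ 4 + (q 1) ^ 4) = (q 1) ^ 5
    rw [hg₁, hg₂]
    exact (key (q 0) (q 1) (q 2)).mp hq
  · intro hp
    refine ⟨(WithLp.toLp 2 ![p 0, p 1, p 2 + g₁ (p 0) (p 1) - g₂ (p 0) (p 1)] : EuclideanSpace ℝ (Fin 3)),
      ?_, ?_⟩
    · show (p 2 + g₁ (p 0) (p 1) - g₂ (p 0) (p 1)) * ((p 0) ^ 2 + (p 1) ^ 2) = (p 1) ^ 3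
      rw [key (p 0) (p 1), ← hg₁, ← hg₂,
        show p 2 + g₁ (p 0) (p 1) - g₂ (p 0) (p 1) - g₁ (p 0) (p 1) + g₂ (p 0) (p 1) = p 2
          from by ring]
      exact hp
    · rw [hh]
      ext i
      fin_cases i
      · rfl
      · rfl
      · show p 2 + g₁ (p 0) (p 1) - g₂ (p 0) (p 1) - g₁ (p 0) (p 1) + g₂ (p 0) (p 1) = p 2
        ring
end
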